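/- Let Π be a 2×2 row-stochastic matrix and μ ∈ (0,1)² with μ₁ > μ₂. Let μ' = Π·μ, and suppose μ'₁ > μ'₂ (after possibly permuting, without loss of generality). Then f(μ'₁, μ'₂) ≥ f(μ₁, μ₂), where f(a,b) = (a−b)/D(b‖a) and D is the binary KL divergence. Consequently, the problem-dependent Thompson sampling regret bound coefficient for the noncompliant 2-armed Bernoulli bandit with effective means μ' is at least that for the compliant bandit with means μ. -/

import Mathlib

noncomputable def binKL (a b : ℝ) : ℝ :=
  a * Real.log (a / b) + (1 - a) * Real.log ((1 - a) / (1 - b))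

/-- f(a,b) = (a−b)/D(b‖a), with the convention f(x,x) = 0. -/
noncomputable def f (a b : ℝ) : ℝ := if a = b then 0 else (a - b) / binKL b a

lemma binKL_eq {x y : ℝ} (hx0 : 0 < x) (hx1 : x < 1) (hy0 : 0 < y) (hy1 : y < 1) :
    binKL x y = x * Real.log x - x * Real.log y
      + (1 - x) * Real.log (1 - x) - (1 - x) * Real.log (1 - y) := by
  rw [binKL, Real.log_div hx0.ne' hy0.ne',
    Real.log_div (by linarith : (0:ℝ) < 1 - x).ne' (by linarith : (0:ℝ) < 1 - y).ne']
  ring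

lemma binKL_nonneg {x y : ℝ} (hx0 : 0 < x) (hx1 : x < 1) (hy0 : 0 < y) (hy1 : y < 1) :
    0 ≤ binKL x y := by
  have h1x : (0:ℝ) < 1 - x := by linarith
  have h1y : (0:ℝ) < 1 - y := by linarith
  have l1 : Real.log (y / x) ≤ y / x - 1 := Real.log_le_sub_one_of_pos (by positivity)
  have l2 : Real.log ((1 - y) / (1 - x)) ≤ (1 - y) / (1 - x) - 1 :=
    Real.log_le_sub_one_of_pos (by positivity)
  rw [Real.log_div hy0.ne' hx0.ne', div_sub_one hx0.ne'] at l1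
  rw [Real.log_div h1y.ne' h1x.ne', div_sub_one h1x.ne'] at l2
  have l1' : (x - y) / x ≤ Real.log x - Real.log y := by
    have : -((y - x) / x) = (x - y) / x := by ring
    linarith [this]
  have l2' : (y - x) / (1 - x) ≤ Real.log (1 - x) - Real.log (1 - y) := by
    have : -((1 - y - (1 - x)) / (1 - x)) = (y - x) / (1 - x) := by ring
    linarith [this]
  have b1 := mul_le_mul_of_nonneg_left l1' hx0.le
  have b2 := mul_le_mul_of_nonneg_left l2' h1x.le
  have e1 : x * ((x - y) / x) = x - y := by field_simp
  have e2 : (1 - x) * ((y - x) / (1 - x)) = y - x := by field_simp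
  rw [e1] at b1
  rw [e2] at b2
  rw [binKL_eq hx0 hx1 hy0 hy1]
  nlinarith [b1, b2]

lemma binKL_pos {x y : ℝ} (hx0 : 0 < x) (hx1 : x < 1) (hy0 : 0 < y) (hy1 : y < 1)
    (hne : x ≠ y) : 0 < binKL x y := by
  have h1x : (0:ℝ) < 1 - x := by linarith
  have h1y : (0:ℝ) < 1 - y := by linarith
  have hyx : y / x ≠ 1 := by
    intro h
    rw [div_eq_one_iff_eq hx0.ne'] at h
    exact hne h.symm
  have l1 : Real.log (y / x) < y / x - 1 :=
    Real.log_lt_sub_one_of_pos (by positivity) hyx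
  have l2 : Real.log ((1 - y) / (1 - x)) ≤ (1 - y) / (1 - x) - 1 :=
    Real.log_le_sub_one_of_pos (by positivity)
  rw [Real.log_div hy0.ne' hx0.ne', div_sub_one hx0.ne'] at l1
  rw [Real.log_div h1y.ne' h1x.ne', div_sub_one h1x.ne'] at l2
  have l1' : (x - y) / x < Real.log x - Real.log y := by
    have : -((y - x) / x) = (x - y) / x := by ring
    linarith [this]
  have l2' : (y - x) / (1 - x) ≤ Real.log (1 - x) - Real.log (1 - y) := by
    have : -((1 - y - (1 - x)) / (1 - x)) = (y - x) / (1 - x) := by ring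
    linarith [this]
  have b1 := (mul_lt_mul_iff_right₀ hx0).2 l1'
  have b2 := mul_le_mul_of_nonneg_left l2' h1x.le
  have e1 : x * ((x - y) / x) = x - y := by field_simp
  have e2 : (1 - x) * ((y - x) / (1 - x)) = y - x := by field_simp
  rw [e1] at b1
  rw [e2] at b2
  rw [binKL_eq hx0 hx1 hy0 hy1]
  nlinarith [b1, b2]

/-- Chi-square upper bound: D(b‖a) ≤ (a-b)²/(a(1-a)). -/
lemma binKL_le_chi2 {b a : ℝ} (hb0 : 0 < b) (hb1 : b < 1) (ha0 : 0 < a) (ha1 : a < 1) :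
    binKL b a ≤ (a - b) ^ 2 / (a * (1 - a)) := by
  have h1a : (0:ℝ) < 1 - a := by linarith
  have h1b : (0:ℝ) < 1 - b := by linarith
  have l1 : Real.log (b / a) ≤ b / a - 1 := Real.log_le_sub_one_of_pos (by positivity)
  have l2 : Real.log ((1 - b) / (1 - a)) ≤ (1 - b) / (1 - a) - 1 :=
    Real.log_le_sub_one_of_pos (by positivity)
  have b1 : b * Real.log (b / a) ≤ b * (b / a - 1) := mul_le_mul_of_nonneg_left l1 hb0.le
  have b2 : (1 - b) * Real.log ((1 - b) / (1 - a)) ≤ (1 - b) * ((1 - b) / (1 - a) - 1) :=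
    mul_le_mul_of_nonneg_left l2 h1b.le
  have key : b * (b / a - 1) + (1 - b) * ((1 - b) / (1 - a) - 1)
      = (a - b) ^ 2 / (a * (1 - a)) := by
    field_simp
    ring
  rw [binKL]
  linarith [b1, b2, key.ge, key.le]

/-- Derivative of binKL in the first argument. -/
lemma hasDerivAt_binKL_fst {a x : ℝ} (ha0 : 0 < a) (ha1 : a < 1) (hx0 : 0 < x) (hx1 : x < 1) :
    HasDerivAt (fun y => binKL y a)
      (Real.log x - Real.log a - Real.log (1 - x) + Real.log (1 - a)) x := by
  have h1x : (0:ℝ) < 1 - x := by linarith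
  have h1 := (hasDerivAt_id x).mul ((Real.hasDerivAt_log hx0.ne').sub_const (Real.log a))
  have hlog1 := (Real.hasDerivAt_log h1x.ne').comp x
    ((hasDerivAt_const x (1:ℝ)).sub (hasDerivAt_id x))
  have h2 := ((hasDerivAt_const x (1:ℝ)).sub (hasDerivAt_id x)).mul
    (hlog1.sub_const (Real.log (1 - a)))
  have h3 := h1.add h2
  have heq : (fun y => binKL y a) =ᶠ[nhds x] (fun y : ℝ => id y * (Real.log y - Real.log a)
      + (1 - id y) * ((Real.log ∘ fun z : ℝ => 1 - id z) y - Real.log (1 - a))) := by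
    filter_upwards [isOpen_Ioo.mem_nhds (⟨hx0, hx1⟩ : x ∈ Set.Ioo (0:ℝ) 1)] with y hy
    simp only [id, Function.comp]
    rw [binKL_eq hy.1 hy.2 ha0 ha1]; ring
  have h4 := h3.congr_of_eventuallyEq heq
  refine h4.congr_deriv ?_
  simp only [id, Function.comp, Pi.sub_apply]
  field_simp
  ring

/-- Derivative of binKL in the second argument. -/
lemma hasDerivAt_binKL_snd {b x : ℝ} (hb0 : 0 < b) (hb1 : b < 1) (hx0 : 0 < x) (hx1 : x < 1) :
    HasDerivAt (fun y => binKL b y) ((1 - b) / (1 - x) - b / x) x := by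
  have h1x : (0:ℝ) < 1 - x := by linarith
  have h1 := ((Real.hasDerivAt_log hx0.ne').const_sub (Real.log b)).const_mul b
  have hlog1 := (Real.hasDerivAt_log h1x.ne').comp x
    ((hasDerivAt_const x (1:ℝ)).sub (hasDerivAt_id x))
  have h2 := (hlog1.const_sub (Real.log (1 - b))).const_mul (1 - b)
  have h3 := h1.add h2
  have heq : (fun y => binKL b y) =ᶠ[nhds x] (fun y : ℝ =>
      b * (Real.log b - Real.log y)
      + (1 - b) * (Real.log (1 - b) - (Real.log ∘ fun z : ℝ => 1 - id z) y)) := by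
    filter_upwards [isOpen_Ioo.mem_nhds (⟨hx0, hx1⟩ : x ∈ Set.Ioo (0:ℝ) 1)] with y hy
    simp only [id, Function.comp]
    rw [binKL_eq hb0 hb1 hy.1 hy.2]; ring
  have h4 := h3.congr_of_eventuallyEq heq
  refine h4.congr_deriv ?_
  field_simp
  ring

/-- Ratio monotonicity in the first argument (a): D(b‖·)/(·-b) is monotone. -/
lemma ratio_mono_fst {b a' a : ℝ} (hb0 : 0 < b) (hba : b < a') (haa : a' ≤ a) (ha1 : a < 1) :
    binKL b a' / (a' - b) ≤ binKL b a / (a - b) := by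
  have hb1 : b < 1 := lt_of_lt_of_le (lt_of_lt_of_le hba haa) ha1.le
  set K : ℝ → ℝ := fun x => binKL b x / (x - b) with hK
  have hde : ∀ x ∈ Set.Ioo b 1, HasDerivAt K
      ((((1 - b) / (1 - x) - b / x) * (x - b) - binKL b x * 1) / (x - b) ^ 2) x := by
    intro x hx
    have hx0 : 0 < x := lt_trans hb0 hx.1
    exact (hasDerivAt_binKL_snd hb0 hb1 hx0 hx.2).div
      ((hasDerivAt_id x).sub_const b) (by have := hx.1; intro h; linarith [sub_eq_zero.mp h])
  have hmono : MonotoneOn K (Set.Icc a' a) := by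
    apply monotoneOn_of_deriv_nonneg (convex_Icc a' a)
    · intro x hx
      have hx' : x ∈ Set.Ioo b 1 := ⟨lt_of_lt_of_le hba hx.1, lt_of_le_of_lt hx.2 ha1⟩
      exact (hde x hx').continuousAt.continuousWithinAt
    · intro x hx
      rw [interior_Icc] at hx
      have hx' : x ∈ Set.Ioo b 1 := ⟨lt_trans hba hx.1, lt_trans hx.2 ha1⟩
      exact (hde x hx').differentiableAt.differentiableWithinAt
    · intro x hx
      rw [interior_Icc] at hx
      have hx' : x ∈ Set.Ioo b 1 := ⟨lt_trans hba hx.1, lt_trans hx.2 ha1⟩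
      rw [(hde x hx').deriv]
      have hx0 : 0 < x := lt_trans hb0 hx'.1
      have hx1 : x < 1 := hx'.2
      have h1x : (0:ℝ) < 1 - x := by linarith
      have hxb : 0 < x - b := by linarith [hx'.1]
      apply div_nonneg _ (by positivity)
      have hchi := binKL_le_chi2 hb0 hb1 hx0 hx1
      have e1 : (1 - b) / (1 - x) - b / x = (x - b) / (x * (1 - x)) := by
        rw [div_sub_div _ _ h1x.ne' hx0.ne', div_eq_div_iff (by positivity) (by positivity)]
        ring
      have e2 : (x - b) / (x * (1 - x)) * (x - b) = (x - b) ^ 2 / (x * (1 - x)) := by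
        rw [div_mul_eq_mul_div]
        ring_nf
      rw [e1, e2]
      linarith
  exact hmono ⟨le_refl a', haa⟩ ⟨haa, le_refl a⟩ haa

/-- Ratio monotonicity in the second argument (b): D(·‖a)/(a-·) is antitone. -/
lemma ratio_anti_snd {a b b' : ℝ} (ha1 : a < 1) (hb0 : 0 < b) (hbb : b ≤ b') (hba : b' < a) :
    binKL b' a / (a - b') ≤ binKL b a / (a - b) := by
  have ha0 : 0 < a := lt_trans (lt_of_lt_of_le hb0 hbb) hba
  set G : ℝ → ℝ := fun y => binKL y a / (a - y) with hG
  have hde : ∀ y ∈ Set.Ioo (0:ℝ) a, HasDerivAt G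
      (((Real.log y - Real.log a - Real.log (1 - y) + Real.log (1 - a)) * (a - y)
        - binKL y a * (0 - 1)) / (a - y) ^ 2) y := by
    intro y hy
    have hy1 : y < 1 := lt_trans hy.2 ha1
    exact (hasDerivAt_binKL_fst ha0 ha1 hy.1 hy1).div
      ((hasDerivAt_const y a).sub (hasDerivAt_id y))
      (by have := hy.2; intro h; linarith [sub_eq_zero.mp h])
  have hanti : AntitoneOn G (Set.Icc b b') := by
    apply antitoneOn_of_deriv_nonpos (convex_Icc b b')
    · intro y hy
      have hy' : y ∈ Set.Ioo (0:ℝ) a := ⟨lt_of_lt_of_le hb0 hy.1, lt_of_le_of_lt hy.2 hba⟩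
      exact (hde y hy').continuousAt.continuousWithinAt
    · intro y hy
      rw [interior_Icc] at hy
      have hy' : y ∈ Set.Ioo (0:ℝ) a := ⟨lt_trans hb0 hy.1, lt_trans hy.2 hba⟩
      exact (hde y hy').differentiableAt.differentiableWithinAt
    · intro y hy
      rw [interior_Icc] at hy
      have hy' : y ∈ Set.Ioo (0:ℝ) a := ⟨lt_trans hb0 hy.1, lt_trans hy.2 hba⟩
      rw [(hde y hy').deriv]
      have hy0 : 0 < y := hy'.1
      have hy1 : y < 1 := lt_trans hy'.2 ha1
      have hya : 0 < a - y := by linarith [hy'.2]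
      apply div_nonpos_of_nonpos_of_nonneg _ (by positivity)
      have hid : (Real.log y - Real.log a - Real.log (1 - y) + Real.log (1 - a)) * (a - y)
          - binKL y a * (0 - 1) = -(binKL a y) := by
        rw [binKL_eq hy0 hy1 ha0 ha1, binKL_eq ha0 ha1 hy0 hy1]
        ring
      rw [hid]
      simpa using binKL_nonneg ha0 ha1 hy0 hy1
  exact hanti ⟨le_refl b, hbb⟩ ⟨hbb, le_refl b'⟩ hbb

lemma f_mono {b b' a' a : ℝ} (hb0 : 0 < b) (hbb : b ≤ b') (hba : b' < a') (haa : a' ≤ a)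
    (ha1 : a < 1) : f a b ≤ f a' b' := by
  have hab : b < a := lt_of_le_of_lt hbb (lt_of_lt_of_le hba haa)
  have hb'0 : 0 < b' := lt_of_lt_of_le hb0 hbb
  have ha'1 : a' < 1 := lt_of_le_of_lt haa ha1
  have hb1 : b < 1 := lt_trans hab ha1
  have hb'1 : b' < 1 := lt_trans hba ha'1
  have ha0 : 0 < a := lt_trans hb0 hab
  have ha'0 : 0 < a' := lt_trans hb'0 hba
  rw [f, f, if_neg (ne_of_gt hab), if_neg (ne_of_gt hba)]
  have hD : 0 < binKL b a := binKL_pos hb0 hb1 ha0 ha1 (ne_of_lt hab)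
  have hD' : 0 < binKL b' a' := binKL_pos hb'0 hb'1 ha'0 ha'1 (ne_of_lt hba)
  have hDm : 0 < binKL b a' := binKL_pos hb0 hb1 ha'0 ha'1
    (ne_of_lt (lt_of_le_of_lt hbb hba))
  have step1 : (a - b) / binKL b a ≤ (a' - b) / binKL b a' := by
    rw [div_le_div_iff₀ hD hDm]
    have h := ratio_mono_fst hb0 (lt_of_le_of_lt hbb hba) haa ha1
    rw [div_le_div_iff₀ (by linarith [lt_of_le_of_lt hbb hba] : (0:ℝ) < a' - b)
      (by linarith : (0:ℝ) < a - b)] at h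
    linarith
  have step2 : (a' - b) / binKL b a' ≤ (a' - b') / binKL b' a' := by
    rw [div_le_div_iff₀ hDm hD']
    have h := ratio_anti_snd ha'1 hb0 hbb hba
    rw [div_le_div_iff₀ (by linarith : (0:ℝ) < a' - b')
      (by linarith [lt_of_le_of_lt hbb hba] : (0:ℝ) < a' - b)] at h
    linarith
  linarith

/-- Theorem 1 (core step): noncompliance increases the regret-bound coefficient
for a 2-armed Bernoulli bandit. -/
theorem noncompliance_increases_coeff (P : Matrix (Fin 2) (Fin 2) ℝ)
    (μ : Fin 2 → ℝ)
    (hP0 : ∀ i j, 0 ≤ P i j) (hP1 : ∀ i, P i 0 + P i 1 = 1)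
    (h0 : μ 0 ∈ Set.Ioo (0:ℝ) 1) (h1 : μ 1 ∈ Set.Ioo (0:ℝ) 1)
    (hμ : μ 1 < μ 0)
    (hμ' : P.mulVec μ 1 < P.mulVec μ 0) :
    f (μ 0) (μ 1) ≤ f (P.mulVec μ 0) (P.mulVec μ 1) := by
  have e0 : P.mulVec μ 0 = P 0 0 * μ 0 + P 0 1 * μ 1 := by
    simp [Matrix.mulVec, dotProduct, Fin.sum_univ_two]
  have e1 : P.mulVec μ 1 = P 1 0 * μ 0 + P 1 1 * μ 1 := by
    simp [Matrix.mulVec, dotProduct, Fin.sum_univ_two]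
  have hub : P.mulVec μ 0 ≤ μ 0 := by
    rw [e0]
    have h01 : P 0 1 * μ 1 ≤ P 0 1 * μ 0 := mul_le_mul_of_nonneg_left hμ.le (hP0 0 1)
    have hsum : P 0 0 * μ 0 + P 0 1 * μ 0 = μ 0 := by
      have : (P 0 0 + P 0 1) * μ 0 = 1 * μ 0 := by rw [hP1 0]
      linarith [this, (by ring : (P 0 0 + P 0 1) * μ 0 = P 0 0 * μ 0 + P 0 1 * μ 0),
        (by ring : (1:ℝ) * μ 0 = μ 0)]
    linarith
  have hlb : μ 1 ≤ P.mulVec μ 1 := by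
    rw [e1]
    have h10 : P 1 0 * μ 1 ≤ P 1 0 * μ 0 := mul_le_mul_of_nonneg_left hμ.le (hP0 1 0)
    have hsum : P 1 0 * μ 1 + P 1 1 * μ 1 = μ 1 := by
      have : (P 1 0 + P 1 1) * μ 1 = 1 * μ 1 := by rw [hP1 1]
      linarith [this, (by ring : (P 1 0 + P 1 1) * μ 1 = P 1 0 * μ 1 + P 1 1 * μ 1),
        (by ring : (1:ℝ) * μ 1 = μ 1)]
    linarith
  exact f_mono h1.1 hlb hμ' hub h0.2
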